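/- Let b > 0 and let s, d be integers with 1 ≤ s ≤ d. If κ, σ > 0 satisfy κ⁴ ≤ b²σ⁴ s² log²(1+d/s²), then inf_{T̂} sup_{θ ∈ B_2(κ) ∩ B_0(s)} P_θ(|T̂(y) − Q(θ)| ≥ κ²/(2 max(b,1))) ≥ (1/4)·exp(1 − e), where the infimum is over all Borel measurable estimators T̂ : ℝ^d → ℝ. -/

import Mathlib

open MeasureTheory ProbabilityTheory Real
open scoped ENNReal NNReal BigOperators

noncomputable section

/-- The Gaussian product measure `N(θ, σ² I_d)` on `ℝ^d = Fin d → ℝ`: the law of the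
observation `y = θ + σ ξ` with `ξ` having i.i.d. standard normal coordinates. -/
def gaussPi (d : ℕ) (σ : ℝ) (θ : Fin d → ℝ) : Measure (Fin d → ℝ) :=
  Measure.pi fun j => gaussianReal (θ j) (Real.toNNReal (σ ^ 2))

/-- Expected squared error `E_θ (T(y) - t)²` (under `P_θ = N(θ, σ² I_d)`) of the
estimator `T` for the target value `t`, as a Lebesgue integral with values in `[0,∞]`. -/
def sqRisk (d : ℕ) (σ : ℝ) (θ : Fin d → ℝ) (T : (Fin d → ℝ) → ℝ) (t : ℝ) : ℝ≥0∞ :=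
  ∫⁻ y, ENNReal.ofReal ((T y - t) ^ 2) ∂(gaussPi d σ θ)


/-- The class `B_0(s)` of `s`-sparse vectors of `ℝ^d`. -/
def B0 (d s : ℕ) : Set (Fin d → ℝ) := {θ | Nat.card {j // θ j ≠ 0} ≤ s}


/-- The Euclidean ball `B_2(κ) = {θ : ∑_j θ_j² ≤ κ²}`. -/
def B2 (d : ℕ) (κ : ℝ) : Set (Fin d → ℝ) := {θ | ∑ j, (θ j) ^ 2 ≤ κ ^ 2}

end


noncomputable section Helpers

/-- density ratio of `N(m,V)` w.r.t. `N(0,V)` -/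
def qratio (V m : ℝ) (x : ℝ) : ℝ≥0∞ := ENNReal.ofReal (Real.exp ((m * x - m ^ 2 / 2) / V))

lemma measurable_qratio (V m : ℝ) : Measurable (qratio V m) := by
  unfold qratio; fun_prop

lemma lintegral_exp_gaussian (V : ℝ) (hV : 0 < V) (c β : ℝ) :
    ∫⁻ x, ENNReal.ofReal (Real.exp (c * x + β)) ∂gaussianReal 0 V.toNNReal
      = ENNReal.ofReal (Real.exp (V * c ^ 2 / 2 + β)) := by
  have hv : V.toNNReal ≠ 0 := by
    simp only [ne_eq, Real.toNNReal_eq_zero, not_le]; exact hV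
  have hVc : ((V.toNNReal : ℝ)) = V := Real.coe_toNNReal V hV.le
  have hmeas : Measurable fun x : ℝ => ENNReal.ofReal (Real.exp (c * x + β)) := by fun_prop
  rw [gaussianReal_of_var_ne_zero 0 hv,
    lintegral_withDensity_eq_lintegral_mul _ (measurable_gaussianPDF 0 _) hmeas]
  have key : ∀ x, (gaussianPDF 0 V.toNNReal * fun x => ENNReal.ofReal (Real.exp (c * x + β))) x
      = ENNReal.ofReal (Real.exp (V * c ^ 2 / 2 + β)) * gaussianPDF (V * c) V.toNNReal x := by
    intro x
    simp only [Pi.mul_apply, gaussianPDF, ← ENNReal.ofReal_mul (gaussianPDFReal_nonneg _ _ _),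
      ← ENNReal.ofReal_mul (Real.exp_nonneg _)]
    congr 1
    have h : rexp (-(x - 0) ^ 2 / (2 * V)) * rexp (c * x + β)
        = rexp (V * c ^ 2 / 2 + β) * rexp (-(x - V * c) ^ 2 / (2 * V)) := by
      rw [← Real.exp_add, ← Real.exp_add]
      congr 1
      field_simp
      ring
    unfold gaussianPDFReal
    rw [hVc]
    linear_combination (√(2 * π * V))⁻¹ * h
  simp_rw [key]
  rw [lintegral_const_mul _ (measurable_gaussianPDF _ _), lintegral_gaussianPDF_eq_one _ hv,
    mul_one]

lemma gaussianReal_eq_withDensity (V : ℝ) (hV : 0 < V) (m : ℝ) :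
    gaussianReal m V.toNNReal = (gaussianReal 0 V.toNNReal).withDensity (qratio V m) := by
  have hv : V.toNNReal ≠ 0 := by
    simp only [ne_eq, Real.toNNReal_eq_zero, not_le]; exact hV
  have hVc : ((V.toNNReal : ℝ)) = V := Real.coe_toNNReal V hV.le
  rw [gaussianReal_of_var_ne_zero 0 hv, gaussianReal_of_var_ne_zero m hv,
    ← withDensity_mul _ (measurable_gaussianPDF _ _) (measurable_qratio V m)]
  congr 1
  funext x
  simp only [Pi.mul_apply, gaussianPDF, qratio,
    ← ENNReal.ofReal_mul (gaussianPDFReal_nonneg _ _ _)]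
  congr 1
  have h : rexp (-(x - 0) ^ 2 / (2 * V)) * rexp ((m * x - m ^ 2 / 2) / V)
      = rexp (-(x - m) ^ 2 / (2 * V)) := by
    rw [← Real.exp_add]
    congr 1
    field_simp
    ring
  unfold gaussianPDFReal
  rw [hVc]
  linear_combination (-(√(2 * π * V))⁻¹) * h

lemma lintegral_pi_prod {n : ℕ} (μ : Fin n → Measure ℝ) [∀ i, IsProbabilityMeasure (μ i)]
    (f : Fin n → ℝ → ℝ≥0∞) (hf : ∀ i, Measurable (f i)) :
    ∫⁻ y, ∏ i, f i (y i) ∂Measure.pi μ = ∏ i, ∫⁻ x, f i x ∂μ i := by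
  induction n with
  | zero => simp
  | succ n ih =>
    have hmp := (measurePreserving_piFinSuccAbove μ 0).symm
    rw [← hmp.lintegral_comp_emb (MeasurableEquiv.measurableEmbedding _)
        (fun y => ∏ i, f i (y i))]
    simp_rw [MeasurableEquiv.piFinSuccAbove_symm_apply, Fin.insertNthEquiv,
      Fin.prod_univ_succ, Fin.insertNth_zero]
    simp only [Fin.zero_succAbove, Equiv.coe_fn_mk, Fin.cons_zero, Fin.cons_succ, cast_eq]
    rw [lintegral_prod_mul (f := f 0) (g := fun y : Fin n → ℝ => ∏ i, f i.succ (y i))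
      (hf 0).aemeasurable
      (Finset.measurable_prod Finset.univ fun i _ =>
        ((hf i.succ).comp (measurable_pi_apply i))).aemeasurable]
    rw [ih (fun i => μ i.succ) (fun i => f i.succ) (fun i => hf i.succ)]

lemma gaussPi_withDensity (d : ℕ) {σ : ℝ} (hσ : 0 < σ) (θ : Fin d → ℝ) :
    gaussPi d σ θ
      = (gaussPi d σ 0).withDensity (fun y => ∏ j, qratio (σ ^ 2) (θ j) (y j)) := by
  have hV : (0:ℝ) < σ ^ 2 := by positivity
  unfold gaussPi
  refine (Measure.pi_eq (μ := fun j => gaussianReal (θ j) (Real.toNNReal (σ ^ 2))) fun sets hsets => ?_)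
  rw [withDensity_apply _ (MeasurableSet.univ_pi hsets),
    ← lintegral_indicator (MeasurableSet.univ_pi hsets)]
  have hind : (Set.univ.pi sets).indicator (fun y => ∏ j, qratio (σ ^ 2) (θ j) (y j))
      = fun y => ∏ j, ((sets j).indicator (qratio (σ ^ 2) (θ j))) (y j) := by
    funext y
    by_cases hy : y ∈ Set.univ.pi sets
    · rw [Set.indicator_of_mem hy]
      exact Finset.prod_congr rfl fun j _ =>
        (Set.indicator_of_mem (hy j (Set.mem_univ j)) _).symm
    · rw [Set.indicator_of_notMem hy]
      rw [Set.mem_univ_pi] at hy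
      push_neg at hy
      obtain ⟨j, hj⟩ := hy
      exact (Finset.prod_eq_zero (Finset.mem_univ j)
        (Set.indicator_of_notMem hj _)).symm
  rw [hind]
  show ∫⁻ y, ∏ j, ((sets j).indicator (qratio (σ ^ 2) (θ j))) (y j)
      ∂Measure.pi (fun _ : Fin d => gaussianReal (0:ℝ) (Real.toNNReal (σ ^ 2))) = _
  rw [lintegral_pi_prod (fun _ : Fin d => gaussianReal (0:ℝ) (Real.toNNReal (σ ^ 2)))
    (fun j => (sets j).indicator (qratio (σ ^ 2) (θ j)))
    (fun j => (measurable_qratio _ _).indicator (hsets j))]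
  refine Finset.prod_congr rfl fun j _ => ?_
  rw [lintegral_indicator (hsets j), ← withDensity_apply _ (hsets j)]
  have h2 := gaussianReal_eq_withDensity (σ ^ 2) hV (θ j)
  show _ = (gaussianReal (θ j) ((σ ^ 2).toNNReal)) (sets j)
  rw [h2]

lemma lintegral_qratio_mul (d : ℕ) {σ : ℝ} (hσ : 0 < σ) (θ η : Fin d → ℝ) :
    ∫⁻ y, (∏ j, qratio (σ ^ 2) (θ j) (y j)) * ∏ j, qratio (σ ^ 2) (η j) (y j) ∂gaussPi d σ 0
      = ENNReal.ofReal (Real.exp ((∑ j, θ j * η j) / σ ^ 2)) := by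
  have hV : (0:ℝ) < σ ^ 2 := by positivity
  have hq : ∀ (m m' x : ℝ), qratio (σ ^ 2) m x * qratio (σ ^ 2) m' x
      = ENNReal.ofReal (Real.exp (((m + m') / σ ^ 2) * x + (-(m ^ 2 + m' ^ 2) / (2 * σ ^ 2)))) := by
    intro m m' x
    unfold qratio
    rw [← ENNReal.ofReal_mul (Real.exp_nonneg _), ← Real.exp_add]
    congr 2
    field_simp
    ring
  simp_rw [← Finset.prod_mul_distrib, hq]
  show ∫⁻ y, ∏ j, (fun x => ENNReal.ofReal (Real.exp (((θ j + η j) / σ ^ 2) * x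
        + (-(θ j ^ 2 + η j ^ 2) / (2 * σ ^ 2))))) (y j)
      ∂Measure.pi (fun _ : Fin d => gaussianReal (0:ℝ) (Real.toNNReal (σ ^ 2))) = _
  rw [lintegral_pi_prod (fun _ : Fin d => gaussianReal (0:ℝ) (Real.toNNReal (σ ^ 2)))
    (fun j x => ENNReal.ofReal (Real.exp (((θ j + η j) / σ ^ 2) * x
      + (-(θ j ^ 2 + η j ^ 2) / (2 * σ ^ 2))))) (fun j => by fun_prop)]
  have h1 : ∀ j : Fin d, ∫⁻ x, ENNReal.ofReal (Real.exp (((θ j + η j) / σ ^ 2) * x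
        + (-(θ j ^ 2 + η j ^ 2) / (2 * σ ^ 2)))) ∂gaussianReal 0 (Real.toNNReal (σ ^ 2))
      = ENNReal.ofReal (Real.exp (θ j * η j / σ ^ 2)) := by
    intro j
    rw [lintegral_exp_gaussian (σ ^ 2) hV]
    congr 2
    field_simp
    ring
  simp_rw [h1]
  rw [← ENNReal.ofReal_prod_of_nonneg (fun _ _ => Real.exp_nonneg _), ← Real.exp_sum]
  congr 2
  rw [Finset.sum_div]

lemma choose_ratio {d s : ℕ} (hsd : s ≤ d) :
    ∀ k ≤ s, ((d - k).choose (s - k) : ℝ) ≤ (d.choose s : ℝ) * ((s : ℝ) / d) ^ k := by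
  intro k
  induction k with
  | zero => simp
  | succ k ih =>
    intro hk1
    have hk : k ≤ s := Nat.le_of_succ_le hk1
    have hks : k < s := hk1
    have hkd : k < d := lt_of_lt_of_le hks hsd
    have hd0 : (0:ℝ) < d := by exact_mod_cast Nat.lt_of_le_of_lt (Nat.zero_le k) hkd
    have hdk0 : (0:ℝ) < (d:ℝ) - k := by
      have : (k:ℝ) < d := by exact_mod_cast hkd
      linarith
    have hsk0 : (0:ℝ) ≤ (s:ℝ) - k := by
      have : (k:ℝ) ≤ s := by exact_mod_cast hk
      linarith
    have hnat : (d - k) * ((d - (k+1)).choose (s - (k+1))) = (d - k).choose (s - k) * (s - k) := by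
      have h := Nat.add_one_mul_choose_eq (d - (k+1)) (s - (k+1))
      have e1 : d - (k+1) + 1 = d - k := by omega
      have e2 : s - (k+1) + 1 = s - k := by omega
      rw [e1, e2] at h
      exact h
    have hcast := congrArg (Nat.cast : ℕ → ℝ) hnat
    push_cast [Nat.cast_sub hkd.le, Nat.cast_sub hk] at hcast
    have hstep : ((d - (k+1)).choose (s - (k+1)) : ℝ)
        = ((d - k).choose (s - k) : ℝ) * (((s:ℝ) - k) / ((d:ℝ) - k)) := by
      field_simp
      linarith [hcast]
    rw [hstep]
    have hratio : ((s:ℝ) - k) / ((d:ℝ) - k) ≤ (s:ℝ) / d := by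
      rw [div_le_div_iff₀ hdk0 hd0]
      have hsc : (s:ℝ) ≤ d := by exact_mod_cast hsd
      nlinarith [Nat.cast_nonneg (α := ℝ) k]
    calc ((d - k).choose (s - k) : ℝ) * (((s:ℝ) - k) / ((d:ℝ) - k))
        ≤ ((d.choose s : ℝ) * ((s : ℝ) / d) ^ k) * ((s:ℝ) / d) :=
          mul_le_mul (ih hk) hratio (div_nonneg hsk0 hdk0.le) (by positivity)
      _ = (d.choose s : ℝ) * ((s : ℝ) / d) ^ (k+1) := by ring

lemma count_supersets {d s : ℕ} (T : Finset (Fin d)) (hTd : T.card ≤ s) :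
    ((Finset.powersetCard s (Finset.univ : Finset (Fin d))).filter
        (fun S => T ⊆ S)).card ≤ (d - T.card).choose (s - T.card) := by
  classical
  have hcard : (Finset.powersetCard (s - T.card)
      ((Finset.univ : Finset (Fin d)) \ T)).card = (d - T.card).choose (s - T.card) := by
    rw [Finset.card_powersetCard, Finset.card_sdiff_of_subset (Finset.subset_univ T), Finset.card_univ,
      Fintype.card_fin]
  rw [← hcard]
  apply Finset.card_le_card_of_injOn (fun S => S \ T)
  · intro S hS
    simp only [Finset.mem_coe, Finset.mem_filter, Finset.mem_powersetCard_univ] at hS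
    obtain ⟨hScard, hTS⟩ := hS
    rw [Finset.mem_coe, Finset.mem_powersetCard]
    constructor
    · exact Finset.sdiff_subset_sdiff (Finset.subset_univ S) le_rfl
    · rw [Finset.card_sdiff_of_subset hTS, hScard]
  · intro S1 h1 S2 h2 heq
    simp only [Finset.mem_coe, Finset.mem_filter, Finset.mem_powersetCard_univ] at h1 h2
    have e1 : S1 = S1 \ T ∪ T := (Finset.sdiff_union_of_subset h1.2).symm
    have e2 : S2 = S2 \ T ∪ T := (Finset.sdiff_union_of_subset h2.2).symm
    have heq' : S1 \ T = S2 \ T := heq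
    rw [e1, e2, heq']

lemma sum_pow_inter_le {d s : ℕ} (hs : 1 ≤ s) (hsd : s ≤ d) (u : ℝ) (hu0 : 0 ≤ u)
    (hu : u * (s:ℝ) ^ 2 ≤ d) (S' : Finset (Fin d)) (hS' : S'.card = s) :
    ∑ S ∈ Finset.powersetCard s (Finset.univ : Finset (Fin d)), (1+u) ^ ((S ∩ S').card)
      ≤ (d.choose s : ℝ) * Real.exp 1 := by
  classical
  have hd0 : (0:ℝ) < d := by
    have : 0 < d := lt_of_lt_of_le hs hsd
    exact_mod_cast this
  have hs0 : (0:ℝ) < s := by exact_mod_cast hs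
  -- step 1: expand the power as a sum over subsets
  have hexp : ∀ S : Finset (Fin d), (1+u) ^ ((S ∩ S').card)
      = ∑ T ∈ (S ∩ S').powerset, u ^ T.card := by
    intro S
    have := Finset.prod_add (fun _ : Fin d => u) (fun _ : Fin d => 1) (S ∩ S')
    simp only [Finset.prod_const, Finset.prod_const_one, one_pow, mul_one] at this
    rw [add_comm (1:ℝ) u]
    rw [← this]
  simp_rw [hexp]
  -- step 2: re-index the inner sum over subsets of S'
  have hre : ∀ S : Finset (Fin d), ∑ T ∈ (S ∩ S').powerset, u ^ T.card
      = ∑ T ∈ S'.powerset, if T ⊆ S then u ^ T.card else 0 := by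
    intro S
    rw [← Finset.sum_filter]
    apply Finset.sum_congr _ (fun _ _ => rfl)
    ext T
    simp only [Finset.mem_powerset, Finset.mem_filter, Finset.subset_inter_iff, and_comm]
  simp_rw [hre]
  rw [Finset.sum_comm]
  -- step 3: count
  have hcount : ∀ T ∈ S'.powerset,
      ∑ S ∈ Finset.powersetCard s (Finset.univ : Finset (Fin d)),
          (if T ⊆ S then u ^ T.card else 0)
        ≤ u ^ T.card * ((d - T.card).choose (s - T.card) : ℝ) := by
    intro T hT
    have hTcard : T.card ≤ s := by
      rw [← hS']
      exact Finset.card_le_card (Finset.mem_powerset.mp hT)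
    rw [← Finset.sum_filter, Finset.sum_const, nsmul_eq_mul, mul_comm]
    apply mul_le_mul_of_nonneg_left _ (pow_nonneg hu0 _)
    exact_mod_cast count_supersets T hTcard
  calc ∑ T ∈ S'.powerset, ∑ S ∈ Finset.powersetCard s (Finset.univ : Finset (Fin d)),
        (if T ⊆ S then u ^ T.card else 0)
      ≤ ∑ T ∈ S'.powerset, u ^ T.card * ((d - T.card).choose (s - T.card) : ℝ) :=
        Finset.sum_le_sum hcount
    _ = ∑ k ∈ Finset.range (s + 1), ∑ T ∈ Finset.powersetCard k S',
          u ^ T.card * ((d - T.card).choose (s - T.card) : ℝ) := by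
        rw [Finset.sum_powerset, hS']
    _ ≤ ∑ k ∈ Finset.range (s + 1),
          (s.choose k : ℝ) * ((d.choose s : ℝ) * ((1:ℝ)/s) ^ k) := by
        apply Finset.sum_le_sum
        intro k hk
        have hks : k ≤ s := Nat.lt_succ_iff.mp (Finset.mem_range.mp hk)
        have hTk : ∀ T ∈ Finset.powersetCard k S', u ^ T.card
            * ((d - T.card).choose (s - T.card) : ℝ)
            ≤ (d.choose s : ℝ) * ((1:ℝ)/s) ^ k := by
          intro T hT
          have hTc : T.card = k := (Finset.mem_powersetCard.mp hT).2
          rw [hTc]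
          calc u ^ k * ((d - k).choose (s - k) : ℝ)
              ≤ u ^ k * ((d.choose s : ℝ) * ((s : ℝ) / d) ^ k) := by
                apply mul_le_mul_of_nonneg_left (choose_ratio hsd k hks) (pow_nonneg hu0 _)
            _ = (d.choose s : ℝ) * ((s : ℝ) * u / d) ^ k := by
                have hd0' : (d:ℝ) ≠ 0 := ne_of_gt hd0
                field_simp
                ring
            _ ≤ (d.choose s : ℝ) * ((1:ℝ)/s) ^ k := by
                apply mul_le_mul_of_nonneg_left _ (Nat.cast_nonneg _)
                apply pow_le_pow_left₀ (by positivity)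
                rw [div_le_div_iff₀ hd0 hs0]
                nlinarith
        calc ∑ T ∈ Finset.powersetCard k S', u ^ T.card
                * ((d - T.card).choose (s - T.card) : ℝ)
            ≤ ∑ _T ∈ Finset.powersetCard k S', (d.choose s : ℝ) * ((1:ℝ)/s) ^ k :=
              Finset.sum_le_sum hTk
          _ = (s.choose k : ℝ) * ((d.choose s : ℝ) * ((1:ℝ)/s) ^ k) := by
              rw [Finset.sum_const, Finset.card_powersetCard, hS', nsmul_eq_mul]
    _ = (d.choose s : ℝ) * ∑ k ∈ Finset.range (s + 1), (s.choose k : ℝ) * ((1:ℝ)/s) ^ k := by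
        rw [Finset.mul_sum]
        apply Finset.sum_congr rfl
        intro k _
        ring
    _ ≤ (d.choose s : ℝ) * Real.exp 1 := by
        apply mul_le_mul_of_nonneg_left _ (Nat.cast_nonneg _)
        have hbin : ∑ k ∈ Finset.range (s + 1), (s.choose k : ℝ) * ((1:ℝ)/s) ^ k
            = (1 + 1/(s:ℝ)) ^ s := by
          rw [add_comm (1:ℝ) (1/(s:ℝ)), add_pow]
          apply Finset.sum_congr rfl
          intro k _
          rw [one_pow, mul_one, mul_comm]
        rw [hbin]
        have h1 : (1 + 1/(s:ℝ)) ≤ Real.exp (1/(s:ℝ)) := by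
          have := Real.add_one_le_exp (1/(s:ℝ))
          linarith
        calc (1 + 1/(s:ℝ)) ^ s ≤ (Real.exp (1/(s:ℝ))) ^ s :=
              pow_le_pow_left₀ (by positivity) h1 s
          _ = Real.exp 1 := by
              rw [← Real.exp_nat_mul]
              congr 1
              field_simp

lemma enn_min_bound (x t : ℝ≥0∞) (ht : 1 ≤ t) : x / t - x * x / (t * t) ≤ min 1 x := by
  rcases le_or_gt x t with hxt | hxt
  · refine le_trans (tsub_le_self) ?_
    rcases le_or_gt x 1 with hx1 | hx1
    · rw [min_eq_right hx1]
      calc x / t ≤ x / 1 := by gcongr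
        _ = x := div_one x
    · rw [min_eq_left hx1.le]
      calc x / t ≤ t / t := by gcongr
        _ ≤ 1 := ENNReal.div_self_le_one
  · have ht0' : t ≠ 0 := by
      intro h
      rw [h] at ht
      exact absurd ht (by simp)
    have htop : t ≠ ⊤ := hxt.ne_top
    have hone : (1:ℝ≥0∞) ≤ x / t := by
      rw [ENNReal.le_div_iff_mul_le (Or.inl ht0') (Or.inl htop), one_mul]
      exact hxt.le
    have h1 : x / t ≤ x * x / (t * t) := by
      have heq : x * x / (t * t) = (x / t) * (x / t) := by
        simp only [div_eq_mul_inv]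
        rw [ENNReal.mul_inv (Or.inl ht0') (Or.inl htop)]
        exact (mul_mul_mul_comm x t⁻¹ x t⁻¹).symm
      rw [heq]
      calc x / t = 1 * (x / t) := (one_mul _).symm
        _ ≤ (x / t) * (x / t) := mul_le_mul_left hone _
    simp [tsub_eq_zero_of_le h1]

lemma min_mass_lower {α : Type*} [MeasurableSpace α] (μ : Measure α) [IsProbabilityMeasure μ]
    (g : α → ℝ≥0∞) (hg : Measurable g) (h1 : ∫⁻ y, g y ∂μ = 1)
    (h2 : ∫⁻ y, g y * g y ∂μ ≤ ENNReal.ofReal (Real.exp 1)) :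
    ENNReal.ofReal (1 / (4 * Real.exp 1)) ≤ ∫⁻ y, min 1 (g y) ∂μ := by
  set E1 := Real.exp 1 with hE1def
  have hE1 : (0:ℝ) < E1 := Real.exp_pos 1
  set t : ℝ≥0∞ := ENNReal.ofReal (2 * E1) with htdef
  have ht1 : 1 ≤ t := by
    rw [htdef, ← ENNReal.ofReal_one]
    apply ENNReal.ofReal_le_ofReal
    nlinarith [Real.add_one_le_exp (1:ℝ)]
  have htne : t ≠ ⊤ := ENNReal.ofReal_ne_top
  have ht0' : t ≠ 0 := by
    intro h
    rw [h] at ht1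
    exact absurd ht1 (by simp)
  have hmono : ∫⁻ y, (g y / t - g y * g y / (t * t)) ∂μ ≤ ∫⁻ y, min 1 (g y) ∂μ :=
    lintegral_mono fun y => enn_min_bound (g y) t ht1
  refine le_trans ?_ hmono
  have hsub : ∫⁻ y, g y / t ∂μ - ∫⁻ y, g y * g y / (t * t) ∂μ
      ≤ ∫⁻ y, (g y / t - g y * g y / (t * t)) ∂μ := by
    rw [tsub_le_iff_right, ← lintegral_add_right _ (by fun_prop)]
    exact lintegral_mono fun y => le_tsub_add
  refine le_trans ?_ hsub
  have e1 : ∫⁻ y, g y / t ∂μ = 1 / t := by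
    simp_rw [div_eq_mul_inv]
    rw [lintegral_mul_const' _ _ (by simp [ht0']), h1]
  have e2 : ∫⁻ y, g y * g y / (t * t) ∂μ ≤ ENNReal.ofReal E1 / (t * t) := by
    simp_rw [div_eq_mul_inv]
    rw [lintegral_mul_const' _ _ (by simp [ht0'])]
    exact mul_le_mul_left h2 _
  refine le_trans ?_ (tsub_le_tsub (le_of_eq e1.symm) e2)
  have ht0 : (2:ℝ) * E1 > 0 := by positivity
  have hv1 : (1:ℝ≥0∞) / t = ENNReal.ofReal (1 / (2 * E1)) := by
    rw [htdef, one_div, one_div, ← ENNReal.ofReal_inv_of_pos ht0]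
  have hv2 : ENNReal.ofReal E1 / (t * t) = ENNReal.ofReal (1 / (4 * E1)) := by
    rw [htdef, ← ENNReal.ofReal_mul (by positivity), ← ENNReal.ofReal_div_of_pos (by positivity)]
    congr 1
    field_simp
    ring
  rw [hv1, hv2, ← ENNReal.ofReal_sub _ (by positivity)]
  apply ENNReal.ofReal_le_ofReal
  rw [div_sub_div _ _ (by positivity) (by positivity)]
  rw [div_le_div_iff₀ (by positivity) (by positivity)]
  ring_nf
  nlinarith [hE1]

end Helpers

set_option maxHeartbeats 1000000 in
/-- Proposition 7.4: if `κ⁴ ≤ b²σ⁴ s² log²(1+d/s²)` and `1 ≤ s ≤ d`, then every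
measurable estimator `T` of the quadratic functional satisfies
`sup_{θ ∈ B_2(κ) ∩ B_0(s)} P_θ(|T(y) − Q(θ)| ≥ κ²/(2 max(b,1))) ≥ (1/4) exp(1 − e)`. -/
theorem quadratic_functional_prob_lower_sparse
    (b : ℝ) (hb : 0 < b) (s d : ℕ) (hs : 1 ≤ s) (hsd : s ≤ d)
    (κ σ : ℝ) (hκ : 0 < κ) (hσ : 0 < σ)
    (hyp : κ ^ 4 ≤ b ^ 2 * σ ^ 4 * (s : ℝ) ^ 2 * (Real.log (1 + (d : ℝ) / (s : ℝ) ^ 2)) ^ 2) :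
    ∀ T : (Fin d → ℝ) → ℝ, Measurable T →
      ENNReal.ofReal ((1 / 4) * Real.exp (1 - Real.exp 1))
        ≤ ⨆ θ ∈ B2 d κ ∩ B0 d s,
            gaussPi d σ θ {y | κ ^ 2 / (2 * max b 1) ≤ |T y - ∑ j, (θ j) ^ 2|} := by

  intro T hT
  classical
  have hV : (0:ℝ) < σ ^ 2 := by positivity
  have hd1 : 1 ≤ d := le_trans hs hsd
  have hdpos : (0:ℝ) < d := by exact_mod_cast hd1
  have hspos : (0:ℝ) < s := by exact_mod_cast hs
  set L : ℝ := Real.log (1 + (d : ℝ) / (s : ℝ) ^ 2) with hLdef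
  have hL : 0 < L := Real.log_pos (by
    have : (0:ℝ) < (d : ℝ) / (s : ℝ) ^ 2 := by positivity
    linarith)
  -- κ² ≤ b σ² s L
  have hX : (0:ℝ) ≤ b * σ ^ 2 * s * L := by positivity
  have hκs : κ ^ 2 ≤ b * σ ^ 2 * (s : ℝ) * L := by
    nlinarith [hyp, sq_nonneg κ, sq_nonneg (κ ^ 2 + b * σ ^ 2 * (s:ℝ) * L)]
  set a2 : ℝ := min (σ ^ 2 * L) (κ ^ 2 / s) with ha2def
  have ha2pos : 0 < a2 := lt_min (by positivity) (by positivity)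
  set a : ℝ := Real.sqrt a2 with hadef
  have ha2 : a ^ 2 = a2 := Real.sq_sqrt ha2pos.le
  have hapos : 0 < a := Real.sqrt_pos.mpr ha2pos
  set Qv : ℝ := (s : ℝ) * a2 with hQvdef
  have hQvpos : 0 < Qv := by positivity
  have hQκ : Qv ≤ κ ^ 2 := by
    have h1 : a2 ≤ κ ^ 2 / s := min_le_right _ _
    calc Qv ≤ (s:ℝ) * (κ ^ 2 / s) := by
          exact mul_le_mul_of_nonneg_left h1 hspos.le
      _ = κ ^ 2 := by field_simp
  have hmax1 : (1:ℝ) ≤ max b 1 := le_max_right b 1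
  have hmaxb : b ≤ max b 1 := le_max_left b 1
  have hmaxpos : (0:ℝ) < max b 1 := lt_of_lt_of_le one_pos hmax1
  have h2r : κ ^ 2 / max b 1 ≤ Qv := by
    rcases le_total (σ ^ 2 * L) (κ ^ 2 / s) with hcase | hcase
    · have ha2eq : a2 = σ ^ 2 * L := min_eq_left hcase
      have h1 : κ ^ 2 / b ≤ (s:ℝ) * (σ ^ 2 * L) := by
        rw [div_le_iff₀ hb]
        nlinarith [hκs]
      have h2 : κ ^ 2 / max b 1 ≤ κ ^ 2 / b := by
        apply div_le_div_of_nonneg_left (sq_nonneg κ) hb hmaxb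
      rw [hQvdef, ha2eq]
      linarith
    · have ha2eq : a2 = κ ^ 2 / s := min_eq_right hcase
      have : Qv = κ ^ 2 := by rw [hQvdef, ha2eq]; field_simp
      rw [this, div_le_iff₀ hmaxpos]
      nlinarith [sq_nonneg κ]
  -- the sparse parameter vectors
  set F : Finset (Finset (Fin d)) := Finset.powersetCard s (Finset.univ : Finset (Fin d))
    with hFdef
  set N : ℕ := d.choose s with hNdef
  have hN0 : 0 < N := Nat.choose_pos hsd
  have hFcard : F.card = N := by
    rw [hFdef, Finset.card_powersetCard, Finset.card_univ, Fintype.card_fin, hNdef]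
  set θS : Finset (Fin d) → (Fin d → ℝ) := fun S j => if j ∈ S then a else 0 with hθSdef
  have hQsum : ∀ S ∈ F, ∑ j, (θS S j) ^ 2 = Qv := by
    intro S hS
    have hScard : S.card = s := (Finset.mem_powersetCard_univ).mp hS
    have hpt : ∀ j, (θS S j) ^ 2 = if j ∈ S then a2 else 0 := by
      intro j
      by_cases hj : j ∈ S <;> simp [hθSdef, hj, ha2]
    calc ∑ j, (θS S j) ^ 2 = ∑ j, if j ∈ S then a2 else 0 :=
          Finset.sum_congr rfl fun j _ => hpt j
      _ = ∑ j ∈ Finset.univ ∩ S, a2 := Finset.sum_ite_mem _ _ _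
      _ = ∑ j ∈ S, a2 := by rw [Finset.univ_inter]
      _ = Qv := by rw [Finset.sum_const, hScard, nsmul_eq_mul, hQvdef]
  have hmemS : ∀ S ∈ F, θS S ∈ B2 d κ ∩ B0 d s := by
    intro S hS
    have hScard : S.card = s := (Finset.mem_powersetCard_univ).mp hS
    constructor
    · show ∑ j, (θS S j) ^ 2 ≤ κ ^ 2
      rw [hQsum S hS]; exact hQκ
    · show Nat.card {j // θS S j ≠ 0} ≤ s
      have hiff : ∀ j : Fin d, θS S j ≠ 0 ↔ j ∈ S := by
        intro j
        by_cases hj : j ∈ S <;> simp [hθSdef, hj, ne_of_gt hapos]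
      have hequiv : {j // θS S j ≠ 0} ≃ {j // j ∈ S} := Equiv.subtypeEquivRight hiff
      rw [Nat.card_congr hequiv, Nat.card_eq_fintype_card, Fintype.card_coe, hScard]
  have hmem0 : (0 : Fin d → ℝ) ∈ B2 d κ ∩ B0 d s := by
    constructor
    · show ∑ j, ((0 : Fin d → ℝ) j) ^ 2 ≤ κ ^ 2
      simp [sq_nonneg κ]
    · show Nat.card {j // (0 : Fin d → ℝ) j ≠ 0} ≤ s
      haveI : IsEmpty {j // (0 : Fin d → ℝ) j ≠ 0} := ⟨fun ⟨_, hj⟩ => hj rfl⟩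
      rw [Nat.card_of_isEmpty]
      exact Nat.zero_le s
  -- events
  set r : ℝ := κ ^ 2 / (2 * max b 1) with hrdef
  set Ev : ℝ → Set (Fin d → ℝ) := fun q => {y | r ≤ |T y - q|} with hEvdef
  have hEvmeas : ∀ q, MeasurableSet (Ev q) := fun q =>
    measurableSet_le measurable_const ((hT.sub measurable_const).abs)
  have hcover : Ev 0 ∪ Ev Qv = Set.univ := by
    apply Set.eq_univ_of_forall
    intro y
    by_contra hy
    simp only [Set.mem_union, hEvdef, Set.mem_setOf_eq, not_or, not_le] at hy
    obtain ⟨h1, h2⟩ := hy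
    have habs : Qv ≤ |T y - 0| + |T y - Qv| := by
      calc Qv = |Qv| := (abs_of_pos hQvpos).symm
        _ = |(T y - 0) - (T y - Qv)| := by ring_nf
        _ ≤ |T y - 0| + |T y - Qv| := abs_sub _ _
    have h2r' : 2 * r = κ ^ 2 / max b 1 := by
      rw [hrdef]; field_simp
    linarith
  -- probability instances
  haveI hprob : ∀ θ : Fin d → ℝ, IsProbabilityMeasure (gaussPi d σ θ) := fun θ => by
    unfold gaussPi; infer_instance
  -- densities
  have hGmeas : ∀ S : Finset (Fin d),
      Measurable (fun y : Fin d → ℝ => ∏ j, qratio (σ ^ 2) (θS S j) (y j)) := fun S =>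
    Finset.measurable_prod _ fun j _ => (measurable_qratio _ _).comp (measurable_pi_apply j)
  have hGd : ∀ S : Finset (Fin d), gaussPi d σ (θS S)
      = (gaussPi d σ 0).withDensity (fun y => ∏ j, qratio (σ ^ 2) (θS S j) (y j)) :=
    fun S => gaussPi_withDensity d hσ (θS S)
  have hG1 : ∀ S : Finset (Fin d),
      ∫⁻ y, (∏ j, qratio (σ ^ 2) (θS S j) (y j)) ∂gaussPi d σ 0 = 1 := by
    intro S
    have h := congrArg (fun m : Measure (Fin d → ℝ) => m Set.univ) (hGd S)
    rw [withDensity_apply _ MeasurableSet.univ, Measure.restrict_univ] at h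
    rw [← h]
    exact measure_univ
  -- cross moments
  have hcross : ∀ S S' : Finset (Fin d),
      ∑ j, θS S j * θS S' j = a2 * ((S ∩ S').card : ℝ) := by
    intro S S'
    have hpt : ∀ j, θS S j * θS S' j = if j ∈ S ∩ S' then a2 else 0 := by
      intro j
      by_cases hj : j ∈ S <;> by_cases hj' : j ∈ S' <;>
        simp [hθSdef, hj, hj', Finset.mem_inter, ← ha2, sq]
    calc ∑ j, θS S j * θS S' j = ∑ j, if j ∈ S ∩ S' then a2 else 0 :=
          Finset.sum_congr rfl fun j _ => hpt j
      _ = ∑ j ∈ Finset.univ ∩ (S ∩ S'), a2 := Finset.sum_ite_mem _ _ _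
      _ = a2 * ((S ∩ S').card : ℝ) := by
          rw [Finset.univ_inter, Finset.sum_const, nsmul_eq_mul, mul_comm]
  have hexp_le : Real.exp (a2 / σ ^ 2) ≤ 1 + (d : ℝ) / (s : ℝ) ^ 2 := by
    have h1 : a2 / σ ^ 2 ≤ L := by
      rw [div_le_iff₀ hV]
      calc a2 ≤ σ ^ 2 * L := min_le_left _ _
        _ = L * σ ^ 2 := by ring
    calc Real.exp (a2 / σ ^ 2) ≤ Real.exp L := Real.exp_le_exp.mpr h1
      _ = 1 + (d : ℝ) / (s : ℝ) ^ 2 := Real.exp_log (by positivity)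
  have hGG : ∀ S S' : Finset (Fin d),
      ∫⁻ y, (∏ j, qratio (σ ^ 2) (θS S j) (y j)) * ∏ j, qratio (σ ^ 2) (θS S' j) (y j)
          ∂gaussPi d σ 0
        ≤ ENNReal.ofReal ((1 + (d : ℝ) / (s : ℝ) ^ 2) ^ ((S ∩ S').card)) := by
    intro S S'
    rw [lintegral_qratio_mul d hσ (θS S) (θS S'), hcross S S']
    apply ENNReal.ofReal_le_ofReal
    have hcd : a2 * ((S ∩ S').card : ℝ) / σ ^ 2 = ((S ∩ S').card : ℕ) * (a2 / σ ^ 2) := by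
      push_cast; ring
    rw [hcd, Real.exp_nat_mul]
    exact pow_le_pow_left₀ (Real.exp_nonneg _) hexp_le _
  have hsumGG : ∀ S ∈ F,
      ∑ S' ∈ F, ∫⁻ y, (∏ j, qratio (σ ^ 2) (θS S j) (y j))
          * ∏ j, qratio (σ ^ 2) (θS S' j) (y j) ∂gaussPi d σ 0
        ≤ ENNReal.ofReal ((N : ℝ) * Real.exp 1) := by
    intro S hS
    have hScard : S.card = s := (Finset.mem_powersetCard_univ).mp hS
    calc ∑ S' ∈ F, ∫⁻ y, (∏ j, qratio (σ ^ 2) (θS S j) (y j))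
            * ∏ j, qratio (σ ^ 2) (θS S' j) (y j) ∂gaussPi d σ 0
        ≤ ∑ S' ∈ F, ENNReal.ofReal ((1 + (d : ℝ) / (s : ℝ) ^ 2) ^ ((S' ∩ S).card)) := by
          apply Finset.sum_le_sum
          intro S' hS'
          rw [Finset.inter_comm S' S]
          exact hGG S S'
      _ = ENNReal.ofReal (∑ S' ∈ F, (1 + (d : ℝ) / (s : ℝ) ^ 2) ^ ((S' ∩ S).card)) := by
          rw [ENNReal.ofReal_sum_of_nonneg]
          intro S' _
          positivity
      _ ≤ ENNReal.ofReal ((N : ℝ) * Real.exp 1) := by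
          apply ENNReal.ofReal_le_ofReal
          have hsum := sum_pow_inter_le hs hsd ((d : ℝ) / (s : ℝ) ^ 2) (by positivity)
            (by field_simp; exact le_rfl) S hScard
          simpa [hNdef, hFdef] using hsum
  -- the mixture density
  have hNne : (N : ℝ≥0∞) ≠ 0 := Nat.cast_ne_zero.mpr hN0.ne'
  have hNtop : (N : ℝ≥0∞) ≠ ⊤ := ENNReal.natCast_ne_top N
  set g : (Fin d → ℝ) → ℝ≥0∞ :=
    fun y => (N : ℝ≥0∞)⁻¹ * ∑ S ∈ F, ∏ j, qratio (σ ^ 2) (θS S j) (y j) with hgdef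
  have hgmeas : Measurable g := by
    apply Measurable.const_mul
    exact Finset.measurable_sum _ fun S _ => hGmeas S
  have hg1 : ∫⁻ y, g y ∂gaussPi d σ 0 = 1 := by
    rw [hgdef]
    simp only
    rw [lintegral_const_mul _ (Finset.measurable_sum _ fun S _ => hGmeas S),
      lintegral_finset_sum _ fun S _ => hGmeas S]
    simp_rw [hG1]
    rw [Finset.sum_const, hFcard, nsmul_eq_mul, mul_one, ENNReal.inv_mul_cancel hNne hNtop]
  have hg2 : ∫⁻ y, g y * g y ∂gaussPi d σ 0 ≤ ENNReal.ofReal (Real.exp 1) := by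
    have hptw : ∀ y, g y * g y = (N : ℝ≥0∞)⁻¹ * ((N : ℝ≥0∞)⁻¹ *
        ∑ S ∈ F, ∑ S' ∈ F, (∏ j, qratio (σ ^ 2) (θS S j) (y j))
          * ∏ j, qratio (σ ^ 2) (θS S' j) (y j)) := by
      intro y
      rw [hgdef]
      simp only
      rw [mul_mul_mul_comm, Finset.sum_mul_sum, mul_assoc]
    simp_rw [hptw]
    rw [lintegral_const_mul _ (by
        apply Measurable.const_mul
        apply Finset.measurable_sum
        intro S _
        apply Finset.measurable_sum
        intro S' _
        exact (hGmeas S).mul (hGmeas S')),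
      lintegral_const_mul _ (by
        apply Finset.measurable_sum
        intro S _
        apply Finset.measurable_sum
        intro S' _
        exact (hGmeas S).mul (hGmeas S'))]
    rw [lintegral_finset_sum _ (fun S _ => by
        apply Finset.measurable_sum
        intro S' _
        exact (hGmeas S).mul (hGmeas S'))]
    have hinner : ∀ S ∈ F, ∫⁻ y, (∑ S' ∈ F, (∏ j, qratio (σ ^ 2) (θS S j) (y j))
          * ∏ j, qratio (σ ^ 2) (θS S' j) (y j)) ∂gaussPi d σ 0
        ≤ ENNReal.ofReal ((N : ℝ) * Real.exp 1) := by
      intro S hS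
      rw [lintegral_finset_sum _ (fun S' _ => (hGmeas S).fun_mul (hGmeas S'))]
      exact hsumGG S hS
    calc (N : ℝ≥0∞)⁻¹ * ((N : ℝ≥0∞)⁻¹ * ∑ S ∈ F, ∫⁻ y,
            (∑ S' ∈ F, (∏ j, qratio (σ ^ 2) (θS S j) (y j))
              * ∏ j, qratio (σ ^ 2) (θS S' j) (y j)) ∂gaussPi d σ 0)
        ≤ (N : ℝ≥0∞)⁻¹ * ((N : ℝ≥0∞)⁻¹ * ∑ _S ∈ F, ENNReal.ofReal ((N : ℝ) * Real.exp 1)) := by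
          apply mul_le_mul_right
          apply mul_le_mul_right
          exact Finset.sum_le_sum hinner
      _ = ENNReal.ofReal (Real.exp 1) := by
          rw [Finset.sum_const, hFcard, nsmul_eq_mul,
            ENNReal.ofReal_mul (Nat.cast_nonneg N), ENNReal.ofReal_natCast]
          calc (N : ℝ≥0∞)⁻¹ * ((N : ℝ≥0∞)⁻¹ * ((N : ℝ≥0∞) * ((N : ℝ≥0∞)
                * ENNReal.ofReal (Real.exp 1))))
              = ((N : ℝ≥0∞)⁻¹ * (N : ℝ≥0∞)) * (((N : ℝ≥0∞)⁻¹ * (N : ℝ≥0∞))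
                * ENNReal.ofReal (Real.exp 1)) := by ring
            _ = ENNReal.ofReal (Real.exp 1) := by
                rw [ENNReal.inv_mul_cancel hNne hNtop, one_mul, one_mul]
  -- lower bound on the minimum mass
  have hkey : ENNReal.ofReal (1 / (4 * Real.exp 1))
      ≤ ∫⁻ y, min 1 (g y) ∂gaussPi d σ 0 :=
    min_mass_lower (gaussPi d σ 0) g hgmeas hg1 hg2
  -- split over the two events
  have hsplit : ∫⁻ y, min 1 (g y) ∂gaussPi d σ 0
      ≤ gaussPi d σ 0 (Ev 0)
        + (N : ℝ≥0∞)⁻¹ * ∑ S ∈ F, gaussPi d σ (θS S) (Ev Qv) := by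
    calc ∫⁻ y, min 1 (g y) ∂gaussPi d σ 0
        = ∫⁻ y in Ev 0 ∪ Ev Qv, min 1 (g y) ∂gaussPi d σ 0 := by
          rw [hcover, setLIntegral_univ]
      _ ≤ (∫⁻ y in Ev 0, min 1 (g y) ∂gaussPi d σ 0)
          + ∫⁻ y in Ev Qv, min 1 (g y) ∂gaussPi d σ 0 := lintegral_union_le _ _ _
      _ ≤ gaussPi d σ 0 (Ev 0)
          + (N : ℝ≥0∞)⁻¹ * ∑ S ∈ F, gaussPi d σ (θS S) (Ev Qv) := by
          apply add_le_add
          · calc ∫⁻ y in Ev 0, min 1 (g y) ∂gaussPi d σ 0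
                ≤ ∫⁻ _y in Ev 0, 1 ∂gaussPi d σ 0 :=
                  lintegral_mono fun y => min_le_left _ _
              _ = gaussPi d σ 0 (Ev 0) := setLIntegral_one _
          · calc ∫⁻ y in Ev Qv, min 1 (g y) ∂gaussPi d σ 0
                ≤ ∫⁻ y in Ev Qv, g y ∂gaussPi d σ 0 :=
                  lintegral_mono fun y => min_le_right _ _
              _ = (N : ℝ≥0∞)⁻¹ * ∑ S ∈ F, gaussPi d σ (θS S) (Ev Qv) := by
                  rw [hgdef]
                  simp only
                  rw [lintegral_const_mul _ (Finset.measurable_sum _ fun S _ => hGmeas S),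
                    lintegral_finset_sum _ fun S _ => hGmeas S]
                  congr 1
                  apply Finset.sum_congr rfl
                  intro S _
                  rw [hGd S, withDensity_apply _ (hEvmeas Qv)]
  -- compare with the supremum
  set R : ℝ≥0∞ := ⨆ θ ∈ B2 d κ ∩ B0 d s,
      gaussPi d σ θ {y | κ ^ 2 / (2 * max b 1) ≤ |T y - ∑ j, (θ j) ^ 2|} with hRdef
  have hsup0 : gaussPi d σ 0 (Ev 0) ≤ R := by
    have h0 : {y | κ ^ 2 / (2 * max b 1) ≤ |T y - ∑ j, ((0 : Fin d → ℝ) j) ^ 2|} = Ev 0 := by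
      rw [hEvdef, hrdef]
      simp
    rw [hRdef]
    have := le_biSup (f := fun θ : Fin d → ℝ =>
      gaussPi d σ θ {y | κ ^ 2 / (2 * max b 1) ≤ |T y - ∑ j, (θ j) ^ 2|}) hmem0
    simpa only [h0] using this
  have hsupS : ∀ S ∈ F, gaussPi d σ (θS S) (Ev Qv) ≤ R := by
    intro S hS
    have h0 : {y | κ ^ 2 / (2 * max b 1) ≤ |T y - ∑ j, (θS S j) ^ 2|} = Ev Qv := by
      rw [hQsum S hS, hEvdef, hrdef]
    rw [hRdef]
    have := le_biSup (f := fun θ : Fin d → ℝ =>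
      gaussPi d σ θ {y | κ ^ 2 / (2 * max b 1) ≤ |T y - ∑ j, (θ j) ^ 2|}) (hmemS S hS)
    simpa only [h0] using this
  have htwo : ENNReal.ofReal (1 / (4 * Real.exp 1)) ≤ 2 * R := by
    calc ENNReal.ofReal (1 / (4 * Real.exp 1))
        ≤ gaussPi d σ 0 (Ev 0)
          + (N : ℝ≥0∞)⁻¹ * ∑ S ∈ F, gaussPi d σ (θS S) (Ev Qv) := hkey.trans hsplit
      _ ≤ R + (N : ℝ≥0∞)⁻¹ * ∑ _S ∈ F, R := by
          apply add_le_add hsup0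
          apply mul_le_mul_right
          exact Finset.sum_le_sum hsupS
      _ = R + R := by
          rw [Finset.sum_const, hFcard, nsmul_eq_mul, ← mul_assoc,
            ENNReal.inv_mul_cancel hNne hNtop, one_mul]
      _ = 2 * R := (two_mul R).symm
  -- numerics
  have hnum : 2 * ((1 / 4) * Real.exp (1 - Real.exp 1)) ≤ 1 / (4 * Real.exp 1) := by
    have hE := Real.exp_pos 1
    have hlog2 : Real.log 2 ≤ Real.exp 1 - 2 := by
      have h1 := Real.exp_one_gt_d9
      have h2 := Real.log_two_lt_d9
      linarith
    have hhalf : Real.exp (2 - Real.exp 1) ≤ 1 / 2 := by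
      have : Real.exp (2 - Real.exp 1) ≤ Real.exp (- Real.log 2) :=
        Real.exp_le_exp.mpr (by linarith)
      rw [Real.exp_neg, Real.exp_log two_pos] at this
      linarith
    have hmul : Real.exp (1 - Real.exp 1) * Real.exp 1 = Real.exp (2 - Real.exp 1) := by
      rw [← Real.exp_add]
      ring_nf
    rw [le_div_iff₀ (by positivity)]
    nlinarith [hE, hhalf, hmul, Real.exp_pos (1 - Real.exp 1), Real.exp_pos (2 - Real.exp 1)]
  have hfinal : 2 * ENNReal.ofReal ((1 / 4) * Real.exp (1 - Real.exp 1)) ≤ 2 * R := by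
    calc 2 * ENNReal.ofReal ((1 / 4) * Real.exp (1 - Real.exp 1))
        = ENNReal.ofReal (2 * ((1 / 4) * Real.exp (1 - Real.exp 1))) := by
          rw [ENNReal.ofReal_mul (by norm_num : (0:ℝ) ≤ 2)]
          norm_num
      _ ≤ ENNReal.ofReal (1 / (4 * Real.exp 1)) := ENNReal.ofReal_le_ofReal hnum
      _ ≤ 2 * R := htwo
  have h2ne : (2 : ℝ≥0∞) ≠ 0 := two_ne_zero
  have h2top : (2 : ℝ≥0∞) ≠ ⊤ := ENNReal.ofNat_ne_top
  exact (ENNReal.mul_le_mul_iff_right h2ne h2top).mp hfinal
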